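/- Let q = 2^e and n = 2k+2 with k ≥ 1. The map sending each 2-dimensional F_q-subspace S of V = F_{q^{2k+1}} × F_q to the F_2-subspace g(S) ⊆ F_{q^{2k+1}} ≅ F_2^{(2k+1)e} is a graph homomorphism from the Grassmann graph J_q(n, 2) to the Kneser-type graph on e-dimensional F_2-subspaces of F_2^{(n-1)e} where adjacency is trivial intersection. -/
import Mathlib


/-- A field of characteristic 2 is a `ZMod 2`-vector space (i.e. `F_2`-vector space). -/
noncomputable instance charTwoModule (F : Type) [Field F] [CharP F 2] : Module (ZMod 2) F :=
  (ZMod.algebra F 2).toModule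

/-- The bivariate function `g((x,x₁),(y,y₁)) = (x₁y + y₁x)^{q+1} + xy^q + x^q y`
on `V = F_{q^{2k+1}} × F_q`. -/
def gfun (K F : Type) [Field K] [Field F] [Algebra K F] (q : ℕ) (xb yb : F × K) : F :=
  (algebraMap K F xb.2 * yb.1 + algebraMap K F yb.2 * xb.1) ^ (q + 1) +
    xb.1 * yb.1 ^ q + xb.1 ^ q * yb.1

open Module Submodule

section aux
set_option linter.unusedSectionVars false
variable {e k : ℕ} {K F : Type} [Field K] [Field F] [Algebra K F] [Fintype K] [Fintype F]
  [CharP F 2]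

lemma twoz : (2 : F) = 0 := by
  have := CharP.cast_eq_zero F 2
  exact_mod_cast this

lemma frobq (e : ℕ) (a b : F) : (a + b) ^ (2:ℕ) ^ e = a ^ (2:ℕ) ^ e + b ^ (2:ℕ) ^ e :=
  add_pow_char_pow a b 2 e

lemma fixK (hK : Fintype.card K = 2 ^ e) (κ : K) :
    (algebraMap K F κ) ^ (2:ℕ) ^ e = algebraMap K F κ := by
  rw [← map_pow, ← hK, FiniteField.pow_card]

lemma nsmul_pow_q (e : ℕ) (c : F) (hc : c ^ (2:ℕ) ^ e = c) (m : ℕ) :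
    (m • c) ^ (2:ℕ) ^ e = m • c := by
  induction m with
  | zero => simp
  | succ m ih => rw [succ_nsmul, frobq, ih, hc]

lemma L1 (hF : Fintype.card F = (2 ^ e) ^ (2 * k + 1)) (a c : F)
    (hc : c ^ (2:ℕ) ^ e = c) (h : a ^ (2:ℕ) ^ e = a + c) : c = 0 := by
  have key : ∀ m : ℕ, a ^ ((2:ℕ) ^ e) ^ m = a + m • c := by
    intro m
    induction m with
    | zero => simp
    | succ m ih =>
      rw [pow_succ, pow_mul, ih, frobq, h, nsmul_pow_q e c hc, succ_nsmul]
      ring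
  have h2 := key (2 * k + 1)
  rw [← hF, FiniteField.pow_card] at h2
  have h3 : (2 * k + 1) • c = 0 := by
    have := h2.symm
    rwa [add_eq_left] at this
  rw [nsmul_eq_mul] at h3
  have hcast : ((2 * k + 1 : ℕ) : F) = 1 := by
    push_cast
    rw [twoz]; ring
  rwa [hcast, one_mul] at h3

lemma L1div (hF : Fintype.card F = (2 ^ e) ^ (2 * k + 1)) (A C D : F) (hD : D ≠ 0)
    (hC : C ^ (2:ℕ) ^ e = C) (h : A ^ (2:ℕ) ^ e * D = (A + C * D) * D ^ (2:ℕ) ^ e) : C = 0 := by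
  apply L1 (k := k) hF (A / D) C hC
  rw [div_pow]
  have hDq : D ^ (2:ℕ) ^ e ≠ 0 := pow_ne_zero _ hD
  field_simp
  linear_combination h

lemma L2 (he : 1 ≤ e) (hK : Fintype.card K = 2 ^ e) (t : F) (ht : t ^ (2:ℕ) ^ e = t) :
    ∃ κ : K, algebraMap K F κ = t := by
  classical
  set P : Polynomial F := Polynomial.X ^ (2:ℕ) ^ e - Polynomial.X with hP
  have hq1 : 1 < (2:ℕ) ^ e := by
    calc 1 < 2 := one_lt_two
    _ ≤ 2 ^ e := Nat.le_self_pow (by omega) 2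
  have hPne : P ≠ 0 := FiniteField.X_pow_card_sub_X_ne_zero F hq1
  have hdeg : P.natDegree = (2:ℕ) ^ e := FiniteField.X_pow_card_sub_X_natDegree_eq F hq1
  have himg : (Finset.univ.image (algebraMap K F)) ⊆ P.roots.toFinset := by
    intro x hx
    simp only [Finset.mem_image] at hx
    obtain ⟨κ, -, rfl⟩ := hx
    rw [Multiset.mem_toFinset, Polynomial.mem_roots hPne]
    simp [hP, Polynomial.IsRoot, fixK hK κ, sub_eq_zero]
  have hcard1 : (Finset.univ.image (algebraMap K F)).card = (2:ℕ) ^ e := by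
    rw [Finset.card_image_of_injective _ (algebraMap K F).injective, Finset.card_univ, hK]
  have hcard2 : P.roots.toFinset.card ≤ (2:ℕ) ^ e := by
    calc P.roots.toFinset.card ≤ Multiset.card P.roots := Multiset.toFinset_card_le _
    _ ≤ P.natDegree := P.card_roots'
    _ = (2:ℕ) ^ e := hdeg
  have heq := Finset.eq_of_subset_of_card_le himg (by rw [hcard1]; exact hcard2)
  have htmem : t ∈ P.roots.toFinset := by
    rw [Multiset.mem_toFinset, Polynomial.mem_roots hPne]
    simp [hP, Polynomial.IsRoot, ht, sub_eq_zero]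
  rw [← heq] at htmem
  simp only [Finset.mem_image] at htmem
  obtain ⟨κ, -, hκ⟩ := htmem
  exact ⟨κ, hκ⟩

lemma key_pure (q : ℕ) (hfrob : ∀ s t : F, (s+t)^q = s^q+t^q) (h2 : (2:F)=0)
    (a b c d X Y X1 Y1 : F) (ha : a^q=a) (hb : b^q=b) (hc : c^q=c) (hd : d^q=d) :
    ((a*X1+b*Y1)*(c*X+d*Y) + (c*X1+d*Y1)*(a*X+b*Y))^(q+1)
      + (a*X+b*Y)*(c*X+d*Y)^q + (a*X+b*Y)^q*(c*X+d*Y)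
    = (X1*((a*d+b*c)*Y) + ((a*d+b*c)*Y1)*X)^(q+1)
      + X*((a*d+b*c)*Y)^q + X^q*((a*d+b*c)*Y) := by
  have hM : (a*d+b*c)^q = a*d+b*c := by rw [hfrob, mul_pow, mul_pow, ha, hb, hc, hd]
  have e1 : (a*X1+b*Y1)*(c*X+d*Y) + (c*X1+d*Y1)*(a*X+b*Y)
      = (a*d+b*c)*(X1*Y+Y1*X) := by
    linear_combination (Y*b*d*Y1 + X*X1*a*c) * h2
  have e2 : X1*((a*d+b*c)*Y) + ((a*d+b*c)*Y1)*X = (a*d+b*c)*(X1*Y+Y1*X) := by ring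
  rw [e1, e2]
  have e3 : (c*X+d*Y)^q = c*X^q + d*Y^q := by rw [hfrob, mul_pow, mul_pow, hc, hd]
  have e4 : (a*X+b*Y)^q = a*X^q + b*Y^q := by rw [hfrob, mul_pow, mul_pow, ha, hb]
  have e5 : ((a*d+b*c)*Y)^q = (a*d+b*c)*Y^q := by rw [mul_pow, hM]
  rw [e3, e4, e5]
  linear_combination (Y*Y^q*b*d + X*X^q*a*c) * h2

lemma key (hK : Fintype.card K = 2 ^ e) (u v : F × K) (α β γ δ : K) :
    gfun K F (2 ^ e) (α•u + β•v) (γ•u + δ•v) = gfun K F (2 ^ e) u ((α*δ + β*γ)•v) := by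
  obtain ⟨X, x1⟩ := u
  obtain ⟨Y, y1⟩ := v
  simp only [Prod.smul_mk, Prod.mk_add_mk]
  simp only [gfun, smul_eq_mul, Algebra.smul_def, map_add, map_mul]
  exact key_pure ((2:ℕ)^e) (frobq e) twoz _ _ _ _ X Y (algebraMap K F x1) (algebraMap K F y1)
    (fixK hK α) (fixK hK β) (fixK hK γ) (fixK hK δ)

lemma gzero (u : F × K) : gfun K F (2 ^ e) u 0 = 0 := by
  have h : (2:ℕ)^e ≠ 0 := by positivity
  simp [gfun, zero_pow h]

lemma gself (hK : Fintype.card K = 2 ^ e) (u : F × K) (κ : K) :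
    gfun K F (2 ^ e) u (κ • u) = 0 := by
  have h := key (e := e) hK u u 1 0 κ 0
  simpa [gzero] using h

lemma gfun_smul (hK : Fintype.card K = 2 ^ e) (u v : F × K) (l : K) :
    gfun K F (2 ^ e) u (l • v)
      = (algebraMap K F l)^2 * (algebraMap K F u.2 * v.1 + algebraMap K F v.2 * u.1)^((2:ℕ)^e+1)
        + algebraMap K F l * (u.1 * v.1^(2:ℕ)^e + u.1^(2:ℕ)^e * v.1) := by
  obtain ⟨X, x1⟩ := u
  obtain ⟨Y, y1⟩ := v
  simp only [Prod.smul_mk]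
  simp only [gfun, smul_eq_mul, Algebra.smul_def, map_mul]
  set L := algebraMap K F l
  set X1 := algebraMap K F x1
  set Y1 := algebraMap K F y1
  have hL : L^(2:ℕ)^e = L := fixK hK l
  have e1 : X1*(L*Y) + L*Y1*X = L*(X1*Y+Y1*X) := by ring
  rw [e1, mul_pow]
  have e2 : L^((2:ℕ)^e+1) = L^2 := by rw [pow_succ, hL]; ring
  have e3 : (L*Y)^(2:ℕ)^e = L*Y^(2:ℕ)^e := by rw [mul_pow, hL]
  rw [e2, e3]
  ring

lemma core (he : 1 ≤ e) (hK : Fintype.card K = 2 ^ e)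
    (hF : Fintype.card F = (2 ^ e) ^ (2 * k + 1))
    (u p r : F × K) (hu : u ≠ 0)
    (h : gfun K F (2 ^ e) u p = gfun K F (2 ^ e) u r) :
    ∃ κ : K, p + r = κ • u := by
  obtain ⟨X, x1⟩ := u
  obtain ⟨Y, η⟩ := p
  obtain ⟨Z, ζ⟩ := r
  simp only [gfun] at h
  set q : ℕ := (2:ℕ) ^ e with hq
  set X1 := algebraMap K F x1 with hX1
  set H := algebraMap K F η with hH
  set Z1 := algebraMap K F ζ with hZ1
  have h2 : (2:F) = 0 := twoz
  have hfrob : ∀ s t : F, (s+t)^q = s^q+t^q := frobq e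
  have hX1f : X1^q = X1 := fixK hK x1
  have hHf : H^q = H := fixK hK η
  have hZ1f : Z1^q = Z1 := fixK hK ζ
  have hPq : (X1*Y + H*X)^q = X1*Y^q + H*X^q := by rw [hfrob, mul_pow, mul_pow, hX1f, hHf]
  have hRq : (X1*Z + Z1*X)^q = X1*Z^q + Z1*X^q := by rw [hfrob, mul_pow, mul_pow, hX1f, hZ1f]
  rw [pow_succ, pow_succ, hPq, hRq] at h
  by_cases hx1 : x1 = 0
  · -- case x1 = 0
    subst hx1
    have hX0 : X ≠ 0 := by
      intro hX
      exact hu (by simp [hX])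
    have hX1z : X1 = 0 := by rw [hX1, map_zero]
    rw [hX1z] at h
    have hCfix : ((H + Z1)^2)^q = (H+Z1)^2 := by
      rw [← pow_mul, mul_comm 2 q, pow_mul, hfrob, hHf, hZ1f]
    have hneed : (Y + Z)^q * X = ((Y + Z) + (H + Z1)^2 * X) * X^q := by
      rw [hfrob]
      linear_combination h + (X*Z^q - X^q*Y - H^2*X*X^q - H*Z1*X*X^q) * h2
    have hC0 : (H + Z1)^2 = 0 := L1div (e := e) (k := k) hF (Y+Z) _ X hX0 hCfix hneed
    have hHZ : H + Z1 = 0 := pow_eq_zero_iff (n := 2) (by norm_num) |>.mp hC0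
    have hfix2 : ((Y+Z)/X)^q = (Y+Z)/X := by
      rw [div_pow, div_eq_div_iff (pow_ne_zero _ hX0) hX0]
      linear_combination hneed + ((H+Z1)*X*X^q) * hHZ
    obtain ⟨κ, hκ⟩ := L2 he hK _ hfix2
    refine ⟨κ, ?_⟩
    have hfst : Y + Z = algebraMap K F κ * X := by
      rw [hκ]; field_simp
    have hsnd : η + ζ = 0 := by
      have : algebraMap K F (η + ζ) = 0 := by rw [map_add, ← hH, ← hZ1, hHZ]
      exact (map_eq_zero _).mp this
    ext
    · simpa [Algebra.smul_def] using hfst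
    · simpa using hsnd
  · -- case x1 ≠ 0
    have hX1ne : X1 ≠ 0 := by
      rw [hX1]
      exact fun hc => hx1 ((map_eq_zero _).mp hc)
    by_cases hD : (X1*Y + H*X) + (X1*Z + Z1*X) = 0
    · -- P = R
      refine ⟨x1⁻¹ * (η + ζ), ?_⟩
      have hYZ : X1*(Y+Z) = (H+Z1)*X := by
        linear_combination hD - (H*X + Z1*X)*h2
      have hfst : Y + Z = algebraMap K F (x1⁻¹ * (η + ζ)) * X := by
        rw [map_mul, map_inv₀, map_add, ← hX1, ← hH, ← hZ1]
        field_simp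
        linear_combination hYZ
      have hsnd : η + ζ = (x1⁻¹ * (η + ζ)) * x1 := by field_simp
      ext
      · simpa [Algebra.smul_def] using hfst
      · simpa using hsnd
    · -- D ≠ 0 : contradiction
      exfalso
      have hDq : ((X1*Y + H*X) + (X1*Z + Z1*X))^q
          = (X1*Y^q + H*X^q) + (X1*Z^q + Z1*X^q) := by rw [hfrob, hPq, hRq]
      have hAq : (X1*(X1*Y + H*X) + X)^q = X1*(X1*Y^q + H*X^q) + X^q := by
        rw [hfrob, mul_pow, hX1f, hPq]
      have hneed : (X1*(X1*Y + H*X) + X)^q * ((X1*Y + H*X) + (X1*Z + Z1*X))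
          = ((X1*(X1*Y + H*X) + X) + X1 * ((X1*Y + H*X) + (X1*Z + Z1*X)))
            * ((X1*Y + H*X) + (X1*Z + Z1*X))^q := by
        rw [hAq, hDq]
        linear_combination X1 * h +
          (-Y*Z^q*X1^3 - Y*Y^q*X1^3 + X^q*Z*X1 - X^q*Y*X1^2*Z1 - X^q*Y*X1^2*H
            - X*Z^q*X1^2*H - X*Y^q*X1 - X*Y^q*X1^2*H - X*X^q*X1*H*Z1 - X*X^q*X1*H^2) * h2
      have hC := L1div (e := e) (k := k) hF (X1*(X1*Y + H*X) + X) X1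
        ((X1*Y + H*X) + (X1*Z + Z1*X)) hD hX1f hneed
      exact hX1ne hC
end aux

section spanstuff
set_option linter.unusedSectionVars false
variable {K : Type} [Field K] {M : Type} [AddCommGroup M] [Module K M] [FiniteDimensional K M]

lemma span_two {S : Submodule K M} (hd : Module.finrank K S = 2) :
    ∃ u v : M, u ∈ S ∧ v ∈ S ∧ S = span K {u, v} := by
  have b : Basis (Fin 2) K S := finBasisOfFinrankEq K S hd
  refine ⟨(b 0 : M), (b 1 : M), (b 0).2, (b 1).2, ?_⟩
  have h1 : span K (Set.range fun i : Fin 2 => ((b i : S) : M)) = S := by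
    have : (Set.range fun i : Fin 2 => ((b i : S) : M)) = S.subtype '' (Set.range b) :=
      Set.range_comp S.subtype b
    rw [this, ← Submodule.map_span, b.span_eq, Submodule.map_top, Submodule.range_subtype]
  have h2 : (Set.range fun i : Fin 2 => ((b i : S) : M)) = {(b 0 : M), (b 1 : M)} := by
    ext x
    simp [Fin.exists_fin_two, eq_comm]
  rw [← h2, h1]

lemma span_one {S : Submodule K M} (hd : Module.finrank K S = 1) :
    ∃ u : M, u ≠ 0 ∧ S = span K {u} := by
  have b : Basis (Fin 1) K S := finBasisOfFinrankEq K S hd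
  refine ⟨(b 0 : M), ?_, ?_⟩
  · simpa using b.ne_zero 0
  have h1 : span K (Set.range fun i : Fin 1 => ((b i : S) : M)) = S := by
    have : (Set.range fun i : Fin 1 => ((b i : S) : M)) = S.subtype '' (Set.range b) :=
      Set.range_comp S.subtype b
    rw [this, ← Submodule.map_span, b.span_eq, Submodule.map_top, Submodule.range_subtype]
  have h2 : (Set.range fun i : Fin 1 => ((b i : S) : M)) = {(b 0 : M)} := by
    ext x
    simp [Fin.exists_fin_one, eq_comm]
  rw [← h2, h1]

lemma span_singleton_rank (v : M) : Module.finrank K (span K {v} : Submodule K M) ≤ 1 := by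
  by_cases hv : v = 0
  · subst hv
    rw [Submodule.span_zero_singleton]
    simp
  · rw [finrank_span_singleton hv]

lemma rank2_not_smul {S : Submodule K M} {u v : M} (hS : S = span K {u, v})
    (hd : Module.finrank K S = 2) : ∀ κ : K, u ≠ κ • v := by
  intro κ h
  have hle : S ≤ span K {v} := by
    rw [hS, span_le]
    intro x hx
    rcases hx with rfl | rfl
    · exact h ▸ Submodule.smul_mem _ κ (subset_span rfl)
    · exact subset_span rfl
  have := Submodule.finrank_mono hle
  rw [hd] at this
  have := le_trans this (span_singleton_rank v)
  omega

lemma rank2_snd_ne {S : Submodule K M} {u v : M} (hS : S = span K {u, v})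
    (hd : Module.finrank K S = 2) : v ≠ 0 := by
  intro h
  have hS' : S = span K {v, u} := by rw [hS, Set.pair_comm]
  exact rank2_not_smul hS' hd 0 (by simp [h])

lemma adapted {S : Submodule K M} (hd : Module.finrank K S = 2) {u0 : M} (hu0 : u0 ∈ S) :
    u0 ≠ 0 → ∃ v : M, S = span K {u0, v} := by
  intro hne
  obtain ⟨a, b, ha, hb, hS⟩ := span_two hd
  have main : ∀ a b : M, a ∈ S → b ∈ S → S = span K {a, b} →
      ∀ α β : K, α • a + β • b = u0 → α ≠ 0 → ∃ v, S = span K {u0, v} := by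
    intro a b ha hb hS α β h hα
    have h1 : u0 - β • b = α • a := by rw [← h]; exact add_sub_cancel_right _ _
    have h2 : a = α⁻¹ • (u0 - β • b) := by
      rw [h1, smul_smul, inv_mul_cancel₀ hα, one_smul]
    have ha' : a ∈ span K {u0, b} := by
      rw [h2]
      exact Submodule.smul_mem _ _ (sub_mem (subset_span (by simp))
        (Submodule.smul_mem _ _ (subset_span (by simp))))
    have hb' : b ∈ span K {u0, b} := subset_span (by simp)
    refine ⟨b, le_antisymm ?_ ?_⟩
    · rw [hS, span_le]
      intro x hx
      simp only [Set.mem_insert_iff, Set.mem_singleton_iff] at hx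
      rcases hx with hh | hh
      · subst hh; exact ha'
      · subst hh; exact hb'
    · rw [span_le]
      intro x hx
      simp only [Set.mem_insert_iff, Set.mem_singleton_iff] at hx
      rcases hx with hh | hh
      · subst hh; exact hu0
      · subst hh; exact hb
  obtain ⟨α, β, h⟩ := Submodule.mem_span_pair.mp (hS ▸ hu0)
  by_cases hα : α = 0
  · have hβ : β ≠ 0 := by
      intro hβ
      apply hne
      rw [← h, hα, hβ, zero_smul, zero_smul, add_zero]
    have hS' : S = span K {b, a} := by rw [hS, Set.pair_comm]
    exact main b a hb ha hS' β α (by rw [← h]; exact add_comm _ _) hβ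
  · exact main a b ha hb hS α β h hα
end spanstuff

section good
set_option linter.unusedSectionVars false
variable {e k : ℕ} {K F : Type} [Field K] [Field F] [Algebra K F] [Fintype K] [Fintype F]
  [CharP F 2]

lemma good_pair (he : 1 ≤ e) (hK : Fintype.card K = 2 ^ e)
    (hF : Fintype.card F = (2 ^ e) ^ (2 * k + 1))
    {S : Submodule K (F × K)} (hd : Module.finrank K S = 2) :
    ∃ u v : F × K, S = span K {u, v} ∧
      Function.Injective (fun l : K => gfun K F (2 ^ e) u (l • v)) := by
  classical
  obtain ⟨a, b, ha, hb, hS⟩ := span_two hd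
  have h2 : (2:F) = 0 := twoz
  by_cases hcase : a.2 = 0 ∧ b.2 = 0
  · refine ⟨a, b, hS, ?_⟩
    have hbne : b ≠ 0 := rank2_snd_ne hS hd
    have hb1 : b.1 ≠ 0 := by
      intro hb1
      exact hbne (Prod.ext hb1 hcase.2)
    have hd0 : a.1 * b.1 ^ (2:ℕ)^e + a.1 ^ (2:ℕ)^e * b.1 ≠ 0 := by
      intro hzero
      have hfix2 : (a.1 / b.1) ^ (2:ℕ)^e = a.1 / b.1 := by
        rw [div_pow, div_eq_div_iff (pow_ne_zero _ hb1) hb1]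
        linear_combination hzero - (a.1 * b.1 ^ (2:ℕ)^e) * h2
      obtain ⟨κ, hκ⟩ := L2 he hK _ hfix2
      have hab : a = κ • b := by
        ext
        · show a.1 = κ • b.1
          rw [Algebra.smul_def, hκ]
          field_simp
        · show a.2 = κ • b.2
          rw [hcase.1, hcase.2, smul_zero]
      exact rank2_not_smul hS hd κ hab
    intro l m hlm
    simp only [gfun_smul hK, hcase.1, hcase.2, map_zero, zero_mul, add_zero, zero_add,
      mul_zero] at hlm
    have : (algebraMap K F l - algebraMap K F m)
        * (a.1 * b.1 ^ (2:ℕ)^e + a.1 ^ (2:ℕ)^e * b.1) = 0 := by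
      linear_combination hlm
    rcases mul_eq_zero.mp this with h | h
    · have := sub_eq_zero.mp h
      exact (algebraMap K F).injective this
    · exact absurd h hd0
  · have main : ∀ a b : F × K, a ∈ S → b ∈ S → S = span K {a, b} → a.2 ≠ 0 →
        ∃ u v : F × K, S = span K {u, v} ∧
          Function.Injective (fun l : K => gfun K F (2 ^ e) u (l • v)) := by
      intro a b ha hb hS ha2
      set u : F × K := a.2⁻¹ • a with hu
      set v : F × K := b - b.2 • u with hv
      have hu2 : u.2 = 1 := by
        show a.2⁻¹ • a.2 = 1
        rw [smul_eq_mul, inv_mul_cancel₀ ha2]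
      have hv2 : v.2 = 0 := by
        show b.2 - b.2 • u.2 = 0
        rw [hu2, smul_eq_mul, mul_one, sub_self]
      have huS : u ∈ S := S.smul_mem _ ha
      have hvS : v ∈ S := sub_mem hb (S.smul_mem _ huS)
      have haspan : a ∈ span K {u, v} := by
        have : a = a.2 • u := by
          rw [hu, smul_smul, mul_inv_cancel₀ ha2, one_smul]
        rw [this]
        exact Submodule.smul_mem _ _ (subset_span (by simp))
      have hbspan : b ∈ span K {u, v} := by
        have : b = v + b.2 • u := by rw [hv, sub_add_cancel]
        rw [this]
        exact add_mem (subset_span (by simp))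
          (Submodule.smul_mem _ _ (subset_span (by simp)))
      have hSuv : S = span K {u, v} := by
        refine le_antisymm ?_ ?_
        · rw [hS, span_le, Set.insert_subset_iff, Set.singleton_subset_iff]
          exact ⟨haspan, hbspan⟩
        · rw [span_le, Set.insert_subset_iff, Set.singleton_subset_iff]
          exact ⟨huS, hvS⟩
      have hvne : v ≠ 0 := rank2_snd_ne hSuv hd
      have hv1 : v.1 ≠ 0 := by
        intro h
        exact hvne (Prod.ext h hv2)
      refine ⟨u, v, hSuv, ?_⟩
      intro l m hlm
      by_contra hne
      have hsub : l - m ≠ 0 := sub_ne_zero.mpr hne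
      have hN : algebraMap K F (l - m) ≠ 0 := by
        rw [map_ne_zero]
        exact hsub
      have hNf : (algebraMap K F (l - m))^(2:ℕ)^e = algebraMap K F (l - m) := fixK hK _
      simp only [gfun_smul hK, hu2, hv2, map_one, map_zero, one_mul, zero_mul,
        add_zero] at hlm
      have heq : algebraMap K F (l - m) * (algebraMap K F (l - m) * v.1^((2:ℕ)^e + 1)
          + (u.1 * v.1^(2:ℕ)^e + u.1^(2:ℕ)^e * v.1)) = 0 := by
        rw [map_sub]
        linear_combination hlm + ((algebraMap K F m)^2
          - algebraMap K F l * algebraMap K F m) * v.1^((2:ℕ)^e+1) * h2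
      rcases mul_eq_zero.mp heq with h | h
      · exact hN h
      · have hneed : u.1^(2:ℕ)^e * v.1
            = (u.1 + algebraMap K F (l - m) * v.1) * v.1^(2:ℕ)^e := by
          linear_combination h - (u.1 * v.1^(2:ℕ)^e
            + algebraMap K F (l - m) * v.1 * v.1^(2:ℕ)^e) * h2
        exact hN (L1div (e := e) (k := k) hF u.1 _ v.1 hv1 hNf hneed)
    push_neg at hcase
    by_cases ha2 : a.2 = 0
    · have hS' : S = span K {b, a} := by rw [hS, Set.pair_comm]
      exact main b a hb ha hS' (hcase ha2)
    · exact main a b ha hb hS ha2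

lemma rep (hK : Fintype.card K = 2 ^ e) {S : Submodule K (F × K)} {u0 v0 : F × K}
    (hspan : S = span K {u0, v0}) {x : F}
    (hx : ∃ u ∈ S, ∃ v ∈ S, gfun K F (2 ^ e) u v = x) :
    ∃ l : K, gfun K F (2 ^ e) u0 (l • v0) = x := by
  obtain ⟨u', hu', v', hv', hg⟩ := hx
  obtain ⟨α, β, hab⟩ := Submodule.mem_span_pair.mp (hspan ▸ hu')
  obtain ⟨γ, δ, hcd⟩ := Submodule.mem_span_pair.mp (hspan ▸ hv')
  exact ⟨α*δ + β*γ, by rw [← hg, ← hab, ← hcd, key hK]⟩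

lemma build (he : 1 ≤ e) (hK : Fintype.card K = 2 ^ e)
    (hF : Fintype.card F = (2 ^ e) ^ (2 * k + 1))
    {S : Submodule K (F × K)} (hd : Module.finrank K S = 2) :
    ∃ W : Submodule (ZMod 2) F,
      ((W : Set F) = {w : F | ∃ u ∈ S, ∃ v ∈ S, gfun K F (2 ^ e) u v = w}) ∧
      Module.finrank (ZMod 2) W = e := by
  classical
  obtain ⟨u, v, hS, hinj⟩ := good_pair he hK hF hd
  have h2 : (2:F) = 0 := twoz
  set φ : K → F := fun l => gfun K F (2 ^ e) u (l • v) with hφ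
  have hadd : ∀ l m, φ (l + m) = φ l + φ m := by
    intro l m
    simp only [hφ, gfun_smul hK, map_add]
    linear_combination (algebraMap K F l * algebraMap K F m
      * (algebraMap K F u.2 * v.1 + algebraMap K F v.2 * u.1)^((2:ℕ)^e+1)) * h2
  set φ' : K →+ F := AddMonoidHom.mk' φ hadd with hφ'
  refine ⟨(AddSubgroup.toZModSubmodule 2) φ'.range, ?_, ?_⟩
  · ext x
    simp only [SetLike.mem_coe, AddSubgroup.mem_toZModSubmodule, AddMonoidHom.mem_range,
      Set.mem_setOf_eq]
    constructor
    · rintro ⟨l, rfl⟩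
      exact ⟨u, by rw [hS]; exact subset_span (by simp),
        l • v, by rw [hS]; exact Submodule.smul_mem _ _ (subset_span (by simp)), rfl⟩
    · intro hx
      obtain ⟨l, hl⟩ := rep hK hS hx
      exact ⟨l, hl⟩
  · set W := (AddSubgroup.toZModSubmodule 2) φ'.range with hW
    have hWcard : Nat.card W = 2 ^ e := by
      have hbij : Function.Bijective
          (fun l : K => (⟨φ l, by
            rw [hW, AddSubgroup.mem_toZModSubmodule]
            exact ⟨l, rfl⟩⟩ : W)) := by
        constructor
        · intro l m hlm'
          exact hinj (congrArg Subtype.val hlm')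
        · rintro ⟨x, hx⟩
          rw [hW, AddSubgroup.mem_toZModSubmodule] at hx
          obtain ⟨l, hl⟩ := hx
          exact ⟨l, Subtype.ext hl⟩
      rw [← Nat.card_eq_of_bijective _ hbij, Nat.card_eq_fintype_card, hK]
    have : Fintype W := Fintype.ofFinite _
    have hcardW : Fintype.card W = Fintype.card (ZMod 2) ^ Module.finrank (ZMod 2) W :=
      card_eq_pow_finrank
    rw [Nat.card_eq_fintype_card, hcardW, ZMod.card 2] at hWcard
    exact Nat.pow_right_injective (le_refl 2) hWcard
end good

/-- The map `S ↦ g(S)` is a graph homomorphism from the Grassmann graph `J_q(n,2)`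
(`q = 2^e`, `n = 2k+2`) to the Kneser graph on `e`-dimensional `F_2`-subspaces of
`F_{q^{2k+1}} ≅ F_2^{(n-1)e}`: each image `g(S)` is an `e`-dimensional `F_2`-subspace,
and adjacent 2-spaces (meeting in a line) are sent to distinct, trivially
intersecting `F_2`-subspaces. -/
theorem gfun_graph_hom (e k n : ℕ) (he : 1 ≤ e) (hk : 1 ≤ k) (hn : n = 2 * k + 2)
    (K F : Type) [Field K] [Field F] [Algebra K F] [Fintype K] [Fintype F] [CharP F 2]
    (hK : Fintype.card K = 2 ^ e) (hF : Fintype.card F = (2 ^ e) ^ (2 * k + 1))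
    (S₁ S₂ : Submodule K (F × K))
    (hd₁ : Module.finrank K S₁ = 2) (hd₂ : Module.finrank K S₂ = 2)
    (hne : S₁ ≠ S₂) (hadj : Module.finrank K ↥(S₁ ⊓ S₂) = 1) :
    ∃ W₁ W₂ : Submodule (ZMod 2) F,
      (W₁ : Set F) = {w : F | ∃ u ∈ S₁, ∃ v ∈ S₁, gfun K F (2 ^ e) u v = w} ∧
      (W₂ : Set F) = {w : F | ∃ u ∈ S₂, ∃ v ∈ S₂, gfun K F (2 ^ e) u v = w} ∧
      Module.finrank (ZMod 2) W₁ = e ∧ Module.finrank (ZMod 2) W₂ = e ∧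
      W₁ ≠ W₂ ∧ W₁ ⊓ W₂ = ⊥ := by
  obtain ⟨W₁, hset₁, hrank₁⟩ := build (k := k) he hK hF hd₁
  obtain ⟨W₂, hset₂, hrank₂⟩ := build (k := k) he hK hF hd₂
  have hbot : W₁ ⊓ W₂ = ⊥ := by
    obtain ⟨u0, hu0ne, hspan0⟩ := span_one hadj
    have hu0S₁ : u0 ∈ S₁ := by
      have : u0 ∈ S₁ ⊓ S₂ := by
        rw [hspan0]
        exact subset_span rfl
      exact this.1
    have hu0S₂ : u0 ∈ S₂ := by
      have : u0 ∈ S₁ ⊓ S₂ := by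
        rw [hspan0]
        exact subset_span rfl
      exact this.2
    obtain ⟨v₁, hS₁'⟩ := adapted hd₁ hu0S₁ hu0ne
    obtain ⟨v₂, hS₂'⟩ := adapted hd₂ hu0S₂ hu0ne
    rw [eq_bot_iff]
    intro x hx
    rw [Submodule.mem_bot]
    have hx₁ : x ∈ (W₁ : Set F) := (Submodule.mem_inf.mp hx).1
    have hx₂ : x ∈ (W₂ : Set F) := (Submodule.mem_inf.mp hx).2
    rw [hset₁] at hx₁
    rw [hset₂] at hx₂
    obtain ⟨l, hl⟩ := rep hK hS₁' hx₁
    obtain ⟨m, hm⟩ := rep hK hS₂' hx₂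
    have hcore := core (k := k) he hK hF u0 (l • v₁) (m • v₂) hu0ne (by rw [hl, hm])
    obtain ⟨κ, hκ⟩ := hcore
    have hpS₁ : l • v₁ ∈ S₁ := by
      rw [hS₁']
      exact Submodule.smul_mem _ _ (subset_span (by simp))
    have hrS₂ : m • v₂ ∈ S₂ := by
      rw [hS₂']
      exact Submodule.smul_mem _ _ (subset_span (by simp))
    have hrS₁ : m • v₂ ∈ S₁ := by
      have : m • v₂ = κ • u0 - l • v₁ := by
        rw [← hκ]
        abel
      rw [this]
      exact sub_mem (Submodule.smul_mem _ _ hu0S₁) hpS₁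
    have hrinf : m • v₂ ∈ S₁ ⊓ S₂ := Submodule.mem_inf.mpr ⟨hrS₁, hrS₂⟩
    rw [hspan0, Submodule.mem_span_singleton] at hrinf
    obtain ⟨ν, hν⟩ := hrinf
    rw [← hm, ← hν, gself hK]
  refine ⟨W₁, W₂, hset₁, hset₂, hrank₁, hrank₂, ?_, hbot⟩
  intro hW
  have hW₁bot : W₁ = ⊥ := by
    rw [← hbot, hW, inf_idem]
  rw [hW₁bot, finrank_bot] at hrank₁
  omega
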